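/- If m ≥ 2 and S is a numerical semigroup with concentration 2 and multiplicity m, then the genus of S satisfies g(S) ≥ m. -/
import Mathlib


open Set

/-- A numerical semigroup: contains 0, closed under addition, finite complement. -/
def IsNumSgp (S : Set ℕ) : Prop :=
  0 ∈ S ∧ (∀ a ∈ S, ∀ b ∈ S, a + b ∈ S) ∧ (Sᶜ : Set ℕ).Finite

/-- The multiplicity: least positive element. -/
noncomputable def mult (S : Set ℕ) : ℕ := sInf {n | n ∈ S ∧ n ≠ 0}

/-- next_S(s) = min { x ∈ S | s < x }. -/
noncomputable def nextS (S : Set ℕ) (s : ℕ) : ℕ := sInf {x | x ∈ S ∧ s < x}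

/-- The concentration C(S) = max { next_S(s) - s | s ∈ S \ {0} }. -/
noncomputable def conc (S : Set ℕ) : ℕ :=
  sSup {d | ∃ s ∈ S, s ≠ 0 ∧ d = nextS S s - s}

/-- The Frobenius number: largest gap. -/
noncomputable def frob (S : Set ℕ) : ℕ := sSup (Sᶜ : Set ℕ)

/-- The genus: number of gaps. -/
noncomputable def genus (S : Set ℕ) : ℕ := (Sᶜ : Set ℕ).ncard

/-- x is a minimal generator of S. -/
def IsMinGen (S : Set ℕ) (x : ℕ) : Prop :=
  x ∈ S ∧ x ≠ 0 ∧ ¬∃ a ∈ S, ∃ b ∈ S, a ≠ 0 ∧ b ≠ 0 ∧ a + b = x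

/-- The embedding dimension: number of minimal generators. -/
noncomputable def edim (S : Set ℕ) : ℕ := {x | IsMinGen S x}.ncard

/-- n(S): the number of elements of S smaller than the Frobenius number. -/
noncomputable def nS (S : Set ℕ) : ℕ := {s | s ∈ S ∧ s < frob S}.ncard

/-- The half-line Δ(m) = {0} ∪ {m, m+1, ...}. -/
def Delta (m : ℕ) : Set ℕ := {0} ∪ {n | m ≤ n}

def IsHalfLine (S : Set ℕ) : Prop := ∃ m, S = Delta m

/-- An irreducible numerical semigroup. -/
def Irred (S : Set ℕ) : Prop :=
  ¬∃ T₁ T₂ : Set ℕ, IsNumSgp T₁ ∧ IsNumSgp T₂ ∧ S ⊂ T₁ ∧ S ⊂ T₂ ∧ S = T₁ ∩ T₂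

theorem stmt8 (S : Set ℕ) (m : ℕ) (hm : 2 ≤ m) (hS : IsNumSgp S)
    (hC : conc S = 2) (hmult : mult S = m) :
    m ≤ genus S := by
  obtain ⟨h0, hadd, hfin⟩ := hS
  -- every n > frob S is in S
  have hbig : ∀ n, frob S < n → n ∈ S := by
    intro n hn
    by_contra hns
    exact absurd (le_csSup hfin.bddAbove (show n ∈ (Sᶜ : Set ℕ) from hns)) (not_le.mpr hn)
  -- the set defining conc is nonempty and bounded above
  have hSne : {n | n ∈ S ∧ n ≠ 0}.Nonempty :=
    ⟨frob S + 1, hbig _ (Nat.lt_succ_self _), Nat.succ_ne_zero _⟩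
  have hbdd : BddAbove {d | ∃ s ∈ S, s ≠ 0 ∧ d = nextS S s - s} := by
    refine ⟨frob S + 1, ?_⟩
    rintro d ⟨s, hs, hs0, rfl⟩
    have hmem : s + frob S + 1 ∈ {x | x ∈ S ∧ s < x} :=
      ⟨hbig _ (by omega), by omega⟩
    have := Nat.sInf_le hmem
    simp only [nextS]
    omega
  have hne : {d | ∃ s ∈ S, s ≠ 0 ∧ d = nextS S s - s}.Nonempty := by
    obtain ⟨s, hs, hs0⟩ := hSne
    exact ⟨nextS S s - s, s, hs, hs0, rfl⟩
  have h2mem : (2 : ℕ) ∈ {d | ∃ s ∈ S, s ≠ 0 ∧ d = nextS S s - s} := by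
    rw [← hC]; exact Nat.sSup_mem hne hbdd
  obtain ⟨s, hs, hs0, hdiff⟩ := h2mem
  -- s + 1 ∉ S
  have hnext_mem : nextS S s ∈ {x | x ∈ S ∧ s < x} :=
    Nat.sInf_mem ⟨s + frob S + 1, hbig _ (by omega), by omega⟩
  have hnext : nextS S s = s + 2 := by
    have := hnext_mem.2; omega
  have hgap : s + 1 ∉ S := by
    intro h
    have := Nat.sInf_le (show s + 1 ∈ {x | x ∈ S ∧ s < x} from ⟨h, by omega⟩)
    simp only [nextS] at hnext
    omega
  -- s ≥ m
  have hsm : m ≤ s := hmult ▸ Nat.sInf_le ⟨hs, hs0⟩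
  -- 1..m-1 are gaps
  have hsmall : ∀ k, 1 ≤ k → k < m → k ∉ S := by
    intro k h1 h2 hk
    have : m ≤ k := hmult ▸ Nat.sInf_le ⟨hk, by omega⟩
    omega
  -- the gap set contains insert (s+1) (Ico 1 m)
  have hsub : insert (s + 1) (Set.Ico 1 m) ⊆ (Sᶜ : Set ℕ) := by
    rintro x (rfl | ⟨h1, h2⟩)
    · exact hgap
    · exact hsmall x h1 h2
  have hcard : (insert (s + 1) (Set.Ico 1 m)).ncard = m := by
    rw [Set.ncard_insert_of_notMem (by simp; omega) (Set.finite_Ico _ _)]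
    have : (Set.Ico 1 m).ncard = m - 1 := by
      rw [Set.ncard_eq_toFinset_card', Set.toFinset_Ico, Nat.card_Ico]
    omega
  calc m = (insert (s + 1) (Set.Ico 1 m)).ncard := hcard.symm
    _ ≤ (Sᶜ : Set ℕ).ncard := Set.ncard_le_ncard hsub hfin
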